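/- (Converse for Proposition 6) Let A_{ij} be a smooth symmetric tensor field on ℝ³. Then the tensor field T^{ij} := ε^{kl(i} ∂_l ( ΔA^{j)}_{k} − ∂_p∂^{j)} A_{kp} ), i.e. T^{ij} = (1/2) Σ_{k,l} [ ε^{kli} ∂_l ( ΔA_{jk} − Σ_p ∂_j∂_p A_{kp} ) + ε^{klj} ∂_l ( ΔA_{ik} − Σ_p ∂_i∂_p A_{kp} ) ], is symmetric, transverse (∂_j T^{ij}=0 for all i) and traceless (δ_{ij}T^{ij}=0). -/

import Mathlib

/-- Partial derivative in the k-th Cartesian coordinate direction on ℝ^D. -/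
noncomputable def pd {D : ℕ} (k : Fin D) (f : (Fin D → ℝ) → ℝ) : (Fin D → ℝ) → ℝ :=
  fun x => fderiv ℝ f x (Pi.single k 1)

/-- Euclidean Laplacian Σ_k ∂_k∂_k. -/
noncomputable def lap {D : ℕ} (f : (Fin D → ℝ) → ℝ) : (Fin D → ℝ) → ℝ :=
  fun x => ∑ k, pd k (pd k f) x

/-- Three-dimensional Levi-Civita symbol with ε^{123} = 1. -/
def eps3 (i j k : Fin 3) : ℝ :=
  if (i,j,k) = (0,1,2) ∨ (i,j,k) = (1,2,0) ∨ (i,j,k) = (2,0,1) then 1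
  else if (i,j,k) = (2,1,0) ∨ (i,j,k) = (1,0,2) ∨ (i,j,k) = (0,2,1) then -1
  else 0

/-- Formula (26): T^{ij} = ε^{kl(i} ∂_l ( ΔA^{j)}_k − ∂_p∂^{j)} A_{kp} ). -/
noncomputable def T26 (A : Fin 3 → Fin 3 → (Fin 3 → ℝ) → ℝ) (i j : Fin 3) :
    (Fin 3 → ℝ) → ℝ :=
  fun x => (1/2 : ℝ) * ∑ k, ∑ l,
    (eps3 k l i * pd l (fun y => lap (A j k) y - ∑ p, pd j (pd p (A k p)) y) x
     + eps3 k l j * pd l (fun y => lap (A i k) y - ∑ p, pd i (pd p (A k p)) y) x)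

/-! ### Auxiliary lemmas -/

private lemma htop1 : ((⊤:ℕ∞) : WithTop ℕ∞) + 1 ≤ ((⊤:ℕ∞) : WithTop ℕ∞) := by
  exact_mod_cast le_top

private lemma hone1 : (1 : WithTop ℕ∞) ≤ ((⊤:ℕ∞) : WithTop ℕ∞) := by
  exact_mod_cast le_top

lemma pd_smooth {D : ℕ} {f : (Fin D → ℝ) → ℝ} (hf : ContDiff ℝ (⊤ : ℕ∞) f) (k : Fin D) :
    ContDiff ℝ (⊤ : ℕ∞) (pd k f) :=
  (hf.fderiv_right htop1).clm_apply contDiff_const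

lemma pd_diff {D : ℕ} {f : (Fin D → ℝ) → ℝ} (hf : ContDiff ℝ (⊤ : ℕ∞) f) :
    Differentiable ℝ f := hf.differentiable (by simp)

lemma pd_comm {D : ℕ} {f : (Fin D → ℝ) → ℝ} (hf : ContDiff ℝ (⊤ : ℕ∞) f) (k l : Fin D) :
    pd k (pd l f) = pd l (pd k f) := by
  funext x
  have hd : Differentiable ℝ (fderiv ℝ f) := (hf.fderiv_right htop1).differentiable (by simp)
  have h1 : ∀ m n : Fin D, pd m (pd n f) x
      = fderiv ℝ (fderiv ℝ f) x (Pi.single m 1) (Pi.single n 1) := by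
    intro m n
    unfold pd
    rw [fderiv_clm_apply (hd x) (differentiableAt_const _)]
    simp
  rw [h1, h1]
  exact second_derivative_symmetric (fun y => (pd_diff hf y).hasFDerivAt)
    ((hd x).hasFDerivAt) _ _

lemma pd_sub {D : ℕ} {f g : (Fin D → ℝ) → ℝ} (hf : Differentiable ℝ f)
    (hg : Differentiable ℝ g) (k : Fin D) :
    pd k (fun y => f y - g y) = fun y => pd k f y - pd k g y := by
  funext x
  simp [pd, fderiv_fun_sub (hf x) (hg x)]

lemma pd_sum {D : ℕ} {ι : Type*} (s : Finset ι) {F : ι → (Fin D → ℝ) → ℝ}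
    (hF : ∀ i ∈ s, Differentiable ℝ (F i)) (k : Fin D) :
    pd k (fun y => ∑ i ∈ s, F i y) = fun y => ∑ i ∈ s, pd k (F i) y := by
  funext x
  simp [pd, fderiv_fun_sum (fun i hi => (hF i hi) x)]

lemma pd_const_mul {D : ℕ} (c : ℝ) {f : (Fin D → ℝ) → ℝ} (hf : Differentiable ℝ f) (k : Fin D) :
    pd k (fun y => c * f y) = fun y => c * pd k f y := by
  funext x
  simp [pd, fderiv_const_mul (hf x) c]

lemma pd_lincomb {D : ℕ} (c d : ℝ) {f g : (Fin D → ℝ) → ℝ} (hf : Differentiable ℝ f)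
    (hg : Differentiable ℝ g) (k : Fin D) :
    pd k (fun y => c * f y + d * g y) = fun y => c * pd k f y + d * pd k g y := by
  funext x
  simp [pd, fderiv_fun_add ((hf x).const_mul c) ((hg x).const_mul d),
    fderiv_const_mul (hf x) c, fderiv_const_mul (hg x) d]

lemma lap_smooth {D : ℕ} {f : (Fin D → ℝ) → ℝ} (hf : ContDiff ℝ (⊤ : ℕ∞) f) :
    ContDiff ℝ (⊤ : ℕ∞) (lap f) := by
  have h : lap f = fun x => ∑ k, pd k (pd k f) x := rfl
  rw [h]
  exact ContDiff.sum fun k _ => pd_smooth (pd_smooth hf k) k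

lemma eps_bc (C : Fin 3 → Fin 3 → Fin 3 → ℝ) (h : ∀ a b c, C a b c = C a c b) :
    ∑ c : Fin 3, ∑ a : Fin 3, ∑ b : Fin 3, eps3 a b c * C a b c = 0 := by
  simp [Fin.sum_univ_three, eps3]
  linarith [h 0 1 2, h 1 2 0, h 2 0 1]

lemma eps_ac (C : Fin 3 → Fin 3 → Fin 3 → ℝ) (h : ∀ a b c, C a b c = C c b a) :
    ∑ c : Fin 3, ∑ a : Fin 3, ∑ b : Fin 3, eps3 a b c * C a b c = 0 := by
  simp [Fin.sum_univ_three, eps3]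
  linarith [h 0 1 2, h 1 2 0, h 2 0 1]

/-- The basic building block of formula (26). -/
noncomputable def Bf (A : Fin 3 → Fin 3 → (Fin 3 → ℝ) → ℝ) (j k : Fin 3) : (Fin 3 → ℝ) → ℝ :=
  fun y => lap (A j k) y - ∑ p, pd j (pd p (A k p)) y

lemma T26_eq (A : Fin 3 → Fin 3 → (Fin 3 → ℝ) → ℝ) (i j : Fin 3) :
    T26 A i j = fun x => (1/2 : ℝ) * ∑ k, ∑ l,
      (eps3 k l i * pd l (Bf A j k) x + eps3 k l j * pd l (Bf A i k) x) := rfl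

lemma Bf_smooth {A : Fin 3 → Fin 3 → (Fin 3 → ℝ) → ℝ}
    (hA : ∀ i j, ContDiff ℝ (⊤ : ℕ∞) (A i j)) (j k : Fin 3) :
    ContDiff ℝ (⊤ : ℕ∞) (Bf A j k) := by
  have h1 : ContDiff ℝ (⊤ : ℕ∞) (lap (A j k)) := lap_smooth (hA j k)
  have h2 : ContDiff ℝ (⊤ : ℕ∞) (fun y => ∑ p, pd j (pd p (A k p)) y) :=
    ContDiff.sum fun p _ => pd_smooth (pd_smooth (hA k p) p) j
  exact h1.sub h2

lemma pd_Bf {A : Fin 3 → Fin 3 → (Fin 3 → ℝ) → ℝ}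
    (hA : ∀ i j, ContDiff ℝ (⊤ : ℕ∞) (A i j)) (l j k : Fin 3) :
    pd l (Bf A j k) = fun y => pd l (lap (A j k)) y - ∑ p, pd l (pd j (pd p (A k p))) y := by
  have h1 : Differentiable ℝ (lap (A j k)) := pd_diff (lap_smooth (hA j k))
  have h2 : Differentiable ℝ (fun y => ∑ p, pd j (pd p (A k p)) y) :=
    Differentiable.fun_sum fun p _ => pd_diff (pd_smooth (pd_smooth (hA k p) p) j)
  have e1 : Bf A j k = fun y => lap (A j k) y - (fun y' => ∑ p, pd j (pd p (A k p)) y') y := rfl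
  rw [e1, pd_sub h1 h2 l]
  funext y
  congr 1
  exact congrFun (pd_sum Finset.univ
    (fun p _ => pd_diff (pd_smooth (pd_smooth (hA k p) p) j)) l) y

lemma pd_big (j : Fin 3) (c d : Fin 3 → Fin 3 → ℝ) (P Q : Fin 3 → Fin 3 → (Fin 3 → ℝ) → ℝ)
    (hP : ∀ k l, Differentiable ℝ (P k l)) (hQ : ∀ k l, Differentiable ℝ (Q k l))
    (x : Fin 3 → ℝ) :
    pd j (fun y => (1/2 : ℝ) * ∑ k, ∑ l, (c k l * P k l y + d k l * Q k l y)) x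
      = (1/2 : ℝ) * ∑ k, ∑ l, (c k l * pd j (P k l) x + d k l * pd j (Q k l) x) := by
  have hF : ∀ k l : Fin 3, Differentiable ℝ (fun y => c k l * P k l y + d k l * Q k l y) :=
    fun k l => ((hP k l).const_mul _).add ((hQ k l).const_mul _)
  have h1 : ∀ k : Fin 3,
      Differentiable ℝ (fun y => ∑ l, (c k l * P k l y + d k l * Q k l y)) :=
    fun k => Differentiable.fun_sum fun l _ => hF k l
  have h2 : Differentiable ℝ (fun y => ∑ k, ∑ l, (c k l * P k l y + d k l * Q k l y)) :=
    Differentiable.fun_sum fun k _ => h1 k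
  have e3 : ∀ k : Fin 3, pd j (fun y => ∑ l, (c k l * P k l y + d k l * Q k l y)) x
      = ∑ l, (c k l * pd j (P k l) x + d k l * pd j (Q k l) x) := by
    intro k
    refine (congrFun (pd_sum Finset.univ (fun l _ => hF k l) j) x).trans ?_
    exact Finset.sum_congr rfl fun l _ =>
      congrFun (pd_lincomb (c k l) (d k l) (hP k l) (hQ k l) j) x
  calc pd j (fun y => (1/2 : ℝ) * ∑ k, ∑ l, (c k l * P k l y + d k l * Q k l y)) x
      = (1/2 : ℝ) * pd j (fun y => ∑ k, ∑ l, (c k l * P k l y + d k l * Q k l y)) x :=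
        congrFun (pd_const_mul (1/2 : ℝ) h2 j) x
    _ = (1/2 : ℝ) * ∑ k, pd j (fun y => ∑ l, (c k l * P k l y + d k l * Q k l y)) x :=
        congrArg _ (congrFun (pd_sum Finset.univ (fun k _ => h1 k) j) x)
    _ = (1/2 : ℝ) * ∑ k, ∑ l, (c k l * pd j (P k l) x + d k l * pd j (Q k l) x) :=
        congrArg _ (Finset.sum_congr rfl fun k _ => e3 k)

/-- converse for Proposition 6: for any smooth symmetric A_{ij} on ℝ³,
the tensor field T^{ij} of formula (26) is symmetric, transverse and traceless. -/
theorem stmt_14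
    (A : Fin 3 → Fin 3 → (Fin 3 → ℝ) → ℝ)
    (hsmooth : ∀ i j, ContDiff ℝ (⊤ : ℕ∞) (A i j))
    (hAsym : ∀ i j x, A i j x = A j i x)
    (T : Fin 3 → Fin 3 → (Fin 3 → ℝ) → ℝ)
    (hT : ∀ i j x, T i j x = T26 A i j x) :
    (∀ i j x, T i j x = T j i x) ∧
    (∀ i x, ∑ j, pd j (T i j) x = 0) ∧
    (∀ x, ∑ i, T i i x = 0) := by
  have hAfun : ∀ i j, A i j = A j i := fun i j => funext (hAsym i j)
  have hBs : ∀ j k, ContDiff ℝ (⊤ : ℕ∞) (Bf A j k) := Bf_smooth hsmooth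
  refine ⟨?_, ?_, ?_⟩
  · -- symmetry
    intro i j x
    rw [hT i j x, hT j i x, congrFun (T26_eq A i j) x, congrFun (T26_eq A j i) x]
    congr 1
    exact Finset.sum_congr rfl fun k _ => Finset.sum_congr rfl fun l _ => by ring
  · -- transversality
    intro i x
    have hTfun : ∀ j, T i j = T26 A i j := fun j => funext fun y => hT i j y
    have hstep : ∀ j, pd j (T i j) x = (1/2 : ℝ) * ∑ k, ∑ l,
        (eps3 k l i * pd j (pd l (Bf A j k)) x + eps3 k l j * pd j (pd l (Bf A i k)) x) := by
      intro j
      rw [hTfun j]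
      exact pd_big j (fun k l => eps3 k l i) (fun k l => eps3 k l j)
        (fun k l => pd l (Bf A j k)) (fun k l => pd l (Bf A i k))
        (fun k l => pd_diff (pd_smooth (hBs j k) l))
        (fun k l => pd_diff (pd_smooth (hBs i k) l)) x
    -- the inner divergence vanishes
    have inner_zero : ∀ k l : Fin 3, ∑ j, pd j (pd l (Bf A j k)) x = 0 := by
      intro k l
      have hterm : ∀ j : Fin 3, pd j (pd l (Bf A j k)) x
          = (∑ m, pd j (pd l (pd m (pd m (A j k)))) x)
            - ∑ p, pd j (pd l (pd j (pd p (A k p)))) x := by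
        intro j
        have d1 : Differentiable ℝ (pd l (lap (A j k))) :=
          pd_diff (pd_smooth (lap_smooth (hsmooth j k)) l)
        have d2 : Differentiable ℝ (fun y => ∑ p, pd l (pd j (pd p (A k p))) y) :=
          Differentiable.fun_sum fun p _ =>
            pd_diff (pd_smooth (pd_smooth (pd_smooth (hsmooth k p) p) j) l)
        have e2 : pd j (pd l (Bf A j k)) x
            = pd j (pd l (lap (A j k))) x
              - pd j (fun y => ∑ p, pd l (pd j (pd p (A k p))) y) x := by
          rw [pd_Bf hsmooth l j k]
          exact congrFun (pd_sub d1 d2 j) x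
        have e3 : pd j (fun y => ∑ p, pd l (pd j (pd p (A k p))) y) x
            = ∑ p, pd j (pd l (pd j (pd p (A k p)))) x :=
          congrFun (pd_sum Finset.univ (fun p _ =>
            pd_diff (pd_smooth (pd_smooth (pd_smooth (hsmooth k p) p) j) l)) j) x
        have e4 : pd j (pd l (lap (A j k))) x
            = ∑ m, pd j (pd l (pd m (pd m (A j k)))) x := by
          have eL : pd l (lap (A j k)) = fun y => ∑ m, pd l (pd m (pd m (A j k))) y := by
            have h : lap (A j k) = fun y => ∑ m, pd m (pd m (A j k)) y := rfl
            rw [h]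
            exact pd_sum Finset.univ
              (fun m _ => pd_diff (pd_smooth (pd_smooth (hsmooth j k) m) m)) l
          rw [eL]
          exact congrFun (pd_sum Finset.univ (fun m _ =>
            pd_diff (pd_smooth (pd_smooth (pd_smooth (hsmooth j k) m) m) l)) j) x
        rw [e2, e3, e4]
      have claim1 : ∀ j m : Fin 3, pd j (pd l (pd m (pd m (A j k)))) x
          = pd m (pd m (pd l (pd j (A k j)))) x := by
        intro j m
        have hf : ContDiff ℝ (⊤ : ℕ∞) (A k j) := hsmooth k j
        rw [hAfun j k]
        have c1 : pd j (pd m (pd m (A k j))) = pd m (pd m (pd j (A k j))) :=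
          (pd_comm (pd_smooth hf m) j m).trans (congrArg (pd m) (pd_comm hf j m))
        calc pd j (pd l (pd m (pd m (A k j)))) x
            = pd l (pd j (pd m (pd m (A k j)))) x :=
              congrFun (pd_comm (pd_smooth (pd_smooth hf m) m) j l) x
          _ = pd l (pd m (pd m (pd j (A k j)))) x := congrFun (congrArg (pd l) c1) x
          _ = pd m (pd l (pd m (pd j (A k j)))) x :=
              congrFun (pd_comm (pd_smooth (pd_smooth hf j) m) l m) x
          _ = pd m (pd m (pd l (pd j (A k j)))) x :=
              congrFun (congrArg (pd m) (pd_comm (pd_smooth hf j) l m)) x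
      have claim2 : ∀ j p : Fin 3, pd j (pd l (pd j (pd p (A k p)))) x
          = pd j (pd j (pd l (pd p (A k p)))) x := by
        intro j p
        exact congrFun (congrArg (pd j) (pd_comm (pd_smooth (hsmooth k p) p) l j)) x
      calc ∑ j, pd j (pd l (Bf A j k)) x
          = (∑ j, ∑ m, pd m (pd m (pd l (pd j (A k j)))) x)
            - ∑ j, ∑ p, pd j (pd j (pd l (pd p (A k p)))) x := by
            simp only [hterm, claim1, claim2, Finset.sum_sub_distrib]
        _ = 0 := by rw [Finset.sum_comm]; exact sub_self _
    have Q2 : ∑ j : Fin 3, ∑ k : Fin 3, ∑ l : Fin 3,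
        eps3 k l j * pd j (pd l (Bf A i k)) x = 0 :=
      eps_bc (fun a b c => pd c (pd b (Bf A i a)) x)
        (fun a b c => congrFun (pd_comm (hBs i a) c b) x)
    have Q1 : ∑ j : Fin 3, ∑ k : Fin 3, ∑ l : Fin 3,
        eps3 k l i * pd j (pd l (Bf A j k)) x = 0 := by
      rw [Finset.sum_comm]
      refine Finset.sum_eq_zero fun k _ => ?_
      rw [Finset.sum_comm]
      refine Finset.sum_eq_zero fun l _ => ?_
      rw [← Finset.mul_sum, inner_zero k l, mul_zero]
    simp only [hstep]
    rw [← Finset.mul_sum]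
    simp only [Finset.sum_add_distrib]
    rw [Q1, Q2]
    norm_num
  · -- tracelessness
    intro x
    have hTr : ∀ i, T i i x = ∑ k, ∑ l, eps3 k l i * pd l (Bf A i k) x := by
      intro i
      rw [hT i i x, congrFun (T26_eq A i i) x, Finset.mul_sum]
      refine Finset.sum_congr rfl fun k _ => ?_
      rw [Finset.mul_sum]
      refine Finset.sum_congr rfl fun l _ => ?_
      ring
    simp only [hTr]
    have key : ∀ i k l : Fin 3, eps3 k l i * pd l (Bf A i k) x
        = eps3 k l i * pd l (lap (A i k)) x
          - eps3 k l i * ∑ p, pd l (pd i (pd p (A k p))) x := by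
      intro i k l
      rw [congrFun (pd_Bf hsmooth l i k) x]
      ring
    simp only [key, Finset.sum_sub_distrib]
    rw [eps_ac (fun a b c => pd b (lap (A c a)) x)
        (fun a b c => show pd b (lap (A c a)) x = pd b (lap (A a c)) x by
          rw [hAfun c a]),
      eps_bc (fun a b c => ∑ p, pd b (pd c (pd p (A a p))) x)
        (fun a b c => Finset.sum_congr rfl fun p _ =>
          congrFun (pd_comm (pd_smooth (hsmooth a p) p) b c) x)]
    norm_num
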